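/- Let p = 1 and suppose (U_k)_{k≥0} solves the coefficient recurrence (k² + ck − r + 2aU_0 + 3bU_0²) U_k = −a Σ_{i+j=k, i,j<k} U_i U_j − b Σ_{i+j+l=k, i,j,l<k} U_i U_j U_l for k ≥ 2, with U_0 = 0 and given U_1. If there exist C > 0 and k_0 such that |k² + ck − r| ≥ k²/2 for k ≥ k_0, then there exists M > 0 with |U_k| ≤ M^k for all k; consequently the series Σ U_k e^{kζ} converges absolutely for ζ < −log M. -/

import Mathlib

open Finset


lemma sum_inv_sq_le (n : ℕ) : ∑ i ∈ Finset.range n, (1:ℝ)/(i:ℝ)^2 ≤ 2 := by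
  have key : ∀ m : ℕ, ∑ i ∈ Finset.range (m+2), (1:ℝ)/(i:ℝ)^2 ≤ 2 - 1/((m:ℝ)+1) := by
    intro m
    induction m with
    | zero => norm_num
    | succ m ih =>
      rw [Finset.sum_range_succ]
      have h1 : (1:ℝ)/((m:ℝ)+2)^2 ≤ 1/((m:ℝ)+1) - 1/((m:ℝ)+2) := by
        rw [div_sub_div _ _ (by positivity) (by positivity),
            div_le_div_iff₀ (by positivity) (by positivity)]
        nlinarith [sq_nonneg ((m:ℝ)+1)]
      push_cast
      push_cast at ih
      have e : ((m:ℝ) + 1 + 1) = (m:ℝ) + 2 := by ring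
      rw [e]
      linarith
  match n with
  | 0 => simp
  | 1 => norm_num
  | (m+2) =>
    have h0 : (0:ℝ) ≤ 1/((m:ℝ)+1) := by positivity
    linarith [key m]

lemma conv2 (n : ℕ) :
    ∑ ij ∈ Finset.HasAntidiagonal.antidiagonal n, (1:ℝ)/((ij.1:ℝ)^2*(ij.2:ℝ)^2) ≤ 8/(n:ℝ)^2 := by
  rcases Nat.eq_zero_or_pos n with rfl | hn
  · simp
  have hterm : ∀ ij ∈ Finset.HasAntidiagonal.antidiagonal n,
      (1:ℝ)/((ij.1:ℝ)^2*(ij.2:ℝ)^2) ≤ 2/(n:ℝ)^2 * (1/(ij.1:ℝ)^2 + 1/(ij.2:ℝ)^2) := by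
    intro ij hij
    rw [Finset.HasAntidiagonal.mem_antidiagonal] at hij
    obtain ⟨i, j⟩ := ij
    simp only at hij ⊢
    rcases Nat.eq_zero_or_pos i with rfl | hi
    · simp
      positivity
    rcases Nat.eq_zero_or_pos j with rfl | hj
    · simp
      positivity
    have hi' : (1:ℝ) ≤ (i:ℝ) := by exact_mod_cast hi
    have hj' : (1:ℝ) ≤ (j:ℝ) := by exact_mod_cast hj
    have hn' : (n:ℝ) = (i:ℝ) + (j:ℝ) := by exact_mod_cast hij.symm
    rw [hn', div_add_div _ _ (by positivity) (by positivity), div_mul_div_comm,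
        div_le_div_iff₀ (by positivity) (by positivity)]
    nlinarith [sq_nonneg ((i:ℝ) - j), sq_nonneg ((i:ℝ)*j), sq_nonneg (((i:ℝ)-j)*((i:ℝ)*j))]
  have h1 : ∑ ij ∈ Finset.HasAntidiagonal.antidiagonal n, (1:ℝ)/(ij.1:ℝ)^2 ≤ 2 := by
    rw [Finset.Nat.sum_antidiagonal_eq_sum_range_succ_mk]
    exact sum_inv_sq_le (n+1)
  have h2 : ∑ ij ∈ Finset.HasAntidiagonal.antidiagonal n, (1:ℝ)/(ij.2:ℝ)^2 ≤ 2 := by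
    rw [Finset.Nat.sum_antidiagonal_eq_sum_range_succ_mk]
    have h := Finset.sum_range_reflect (fun i => (1:ℝ)/(i:ℝ)^2) (n+1)
    simp only [Nat.add_sub_cancel] at h
    rw [show (∑ i ∈ Finset.range (n+1), (1:ℝ)/(((i, n-i) : ℕ × ℕ).2:ℝ)^2)
        = ∑ i ∈ Finset.range (n+1), (1:ℝ)/(((n-i : ℕ)):ℝ)^2 from rfl, h]
    exact sum_inv_sq_le (n+1)
  calc ∑ ij ∈ Finset.HasAntidiagonal.antidiagonal n, (1:ℝ)/((ij.1:ℝ)^2*(ij.2:ℝ)^2)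
      ≤ ∑ ij ∈ Finset.HasAntidiagonal.antidiagonal n, 2/(n:ℝ)^2 * (1/(ij.1:ℝ)^2 + 1/(ij.2:ℝ)^2) :=
        Finset.sum_le_sum hterm
    _ = 2/(n:ℝ)^2 * (∑ ij ∈ Finset.HasAntidiagonal.antidiagonal n, 1/(ij.1:ℝ)^2
          + ∑ ij ∈ Finset.HasAntidiagonal.antidiagonal n, 1/(ij.2:ℝ)^2) := by
        rw [← Finset.sum_add_distrib, Finset.mul_sum]
    _ ≤ 2/(n:ℝ)^2 * (2 + 2) := by
        apply mul_le_mul_of_nonneg_left _ (by positivity)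
        linarith
    _ = 8/(n:ℝ)^2 := by ring

set_option maxHeartbeats 1000000 in
theorem cbkdv_recurrence_geometric_bound
    (a b c r : ℂ) (Uc : ℕ → ℂ) (hU0 : Uc 0 = 0)
    (hrec : ∀ k : ℕ, 2 ≤ k →
      ((k : ℂ) ^ 2 + c * k - r + 2 * a * Uc 0 + 3 * b * (Uc 0) ^ 2) * Uc k =
        -a * ∑ ij ∈ (Finset.HasAntidiagonal.antidiagonal k).filter (fun ij => ij.1 < k ∧ ij.2 < k),
            Uc ij.1 * Uc ij.2
        - b * ∑ ij ∈ Finset.HasAntidiagonal.antidiagonal k, ∑ lm ∈ Finset.HasAntidiagonal.antidiagonal ij.2,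
            (if ij.1 < k ∧ lm.1 < k ∧ lm.2 < k then Uc ij.1 * Uc lm.1 * Uc lm.2 else 0))
    (hgrowth : ∃ k0 : ℕ, ∀ k : ℕ, k0 ≤ k →
      (k : ℝ) ^ 2 / 2 ≤ ‖(k : ℂ) ^ 2 + c * k - r‖) :
    ∃ M : ℝ, 0 < M ∧ (∀ k : ℕ, ‖Uc k‖ ≤ M ^ k) ∧
      ∀ ζ : ℝ, ζ < -Real.log M →
        Summable (fun k : ℕ => ‖Uc k * Complex.exp (k * ζ)‖) := by
  obtain ⟨k0, hk0⟩ := hgrowth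
  set N : ℕ := max k0 2 with hN
  set A : ℝ := 1/(8*‖a‖ + 64*‖b‖ + 1) with hAdef
  have hden : (0:ℝ) < 8*‖a‖ + 64*‖b‖ + 1 := by positivity
  have hApos : 0 < A := by positivity
  have hA1 : A ≤ 1 := by
    rw [hAdef]
    rw [div_le_one hden]
    have := norm_nonneg a
    have := norm_nonneg b
    linarith
  have hA8 : A * (8*‖a‖ + 64*‖b‖) ≤ 1 := by
    rw [hAdef, div_mul_eq_mul_div, one_mul, div_le_one hden]
    linarith
  set M : ℝ := 1 + ∑ k ∈ Finset.range N, (k:ℝ)^2 * ‖Uc k‖/A with hMdef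
  have hsum0 : (0:ℝ) ≤ ∑ k ∈ Finset.range N, (k:ℝ)^2 * ‖Uc k‖/A := by positivity
  have hM1 : 1 ≤ M := by rw [hMdef]; linarith
  have hMpos : 0 < M := by linarith
  have hbase : ∀ k : ℕ, k < N → (k:ℝ)^2 * ‖Uc k‖/A ≤ M - 1 := by
    intro k hkN
    have hsingle : (k:ℝ)^2 * ‖Uc k‖/A ≤ ∑ j ∈ Finset.range N, (j:ℝ)^2 * ‖Uc j‖/A :=
      Finset.single_le_sum (f := fun j : ℕ => (j:ℝ)^2 * ‖Uc j‖/A)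
        (fun j _ => by positivity) (Finset.mem_range.mpr hkN)
    rw [hMdef]
    linarith
  clear_value A M
  clear hMdef hAdef hsum0 hden
  -- pointwise bound from induction hypothesis
  have key : ∀ k : ℕ, ‖Uc k‖ ≤ A * M^k / (k:ℝ)^2 := by
    intro k
    induction k using Nat.strong_induction_on with
    | _ k IH =>
    rcases Nat.lt_or_ge k N with hkN | hkN
    · rcases Nat.eq_zero_or_pos k with rfl | hk1
      · simp [hU0]
      · have hsingle := hbase k hkN
        have hMk : M ≤ M^k := by
          calc M = M^1 := (pow_one M).symm
          _ ≤ M^k := pow_le_pow_right₀ hM1 hk1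
        have hk2 : (1:ℝ) ≤ (k:ℝ)^2 := by
          have : (1:ℝ) ≤ (k:ℝ) := by exact_mod_cast hk1
          nlinarith
        rw [le_div_iff₀ (by positivity)]
        have h2 : (k:ℝ)^2 * ‖Uc k‖/A ≤ M^k := by linarith
        calc ‖Uc k‖ * (k:ℝ)^2 = ((k:ℝ)^2 * ‖Uc k‖/A) * A := by field_simp
        _ ≤ M^k * A := by
            apply mul_le_mul_of_nonneg_right h2 (le_of_lt hApos)
        _ = A * M^k := by ring
    · -- inductive case, k ≥ N ≥ 2
      have hk2 : 2 ≤ k := le_trans (le_max_right k0 2) hkN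
      have hk2' : (2:ℝ) ≤ (k:ℝ) := by exact_mod_cast hk2
      have hF : (k:ℝ)^2/2 ≤ ‖(k:ℂ)^2 + c*k - r‖ := hk0 k (le_trans (le_max_left k0 2) hkN)
      have hF1 : (1:ℝ) ≤ ‖(k:ℂ)^2 + c*k - r‖ := by nlinarith
      have hrk := hrec k hk2
      rw [hU0] at hrk
      have e : (k:ℂ)^2 + c*k - r + 2*a*0 + 3*b*0^2 = (k:ℂ)^2 + c*k - r := by ring
      rw [e] at hrk
      -- bound for smaller indices (including 0, where both sides vanish)
      have bnd : ∀ i : ℕ, i < k → ‖Uc i‖ ≤ A * M^i / (i:ℝ)^2 := fun i hi => IH i hi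
      -- bound the quadratic sum
      have hS2 : ‖∑ ij ∈ (Finset.HasAntidiagonal.antidiagonal k).filter (fun ij => ij.1 < k ∧ ij.2 < k),
          Uc ij.1 * Uc ij.2‖ ≤ A^2 * M^k * (8/(k:ℝ)^2) := by
        calc ‖∑ ij ∈ (Finset.HasAntidiagonal.antidiagonal k).filter (fun ij => ij.1 < k ∧ ij.2 < k),
              Uc ij.1 * Uc ij.2‖
            ≤ ∑ ij ∈ (Finset.HasAntidiagonal.antidiagonal k).filter (fun ij => ij.1 < k ∧ ij.2 < k),
              ‖Uc ij.1 * Uc ij.2‖ := norm_sum_le _ _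
          _ ≤ ∑ ij ∈ (Finset.HasAntidiagonal.antidiagonal k).filter (fun ij => ij.1 < k ∧ ij.2 < k),
              A^2 * M^k * (1/((ij.1:ℝ)^2*(ij.2:ℝ)^2)) := by
              apply Finset.sum_le_sum
              intro ij hij
              rw [Finset.mem_filter, Finset.HasAntidiagonal.mem_antidiagonal] at hij
              obtain ⟨hijk, hi, hj⟩ := hij
              have b1 := bnd ij.1 hi
              have b2 := bnd ij.2 hj
              calc ‖Uc ij.1 * Uc ij.2‖ = ‖Uc ij.1‖ * ‖Uc ij.2‖ := norm_mul _ _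
              _ ≤ (A * M^ij.1 / (ij.1:ℝ)^2) * (A * M^ij.2 / (ij.2:ℝ)^2) :=
                  mul_le_mul b1 b2 (norm_nonneg _) (by positivity)
              _ = A^2 * M^(ij.1+ij.2) * (1/((ij.1:ℝ)^2*(ij.2:ℝ)^2)) := by
                  rw [pow_add]; ring
              _ = A^2 * M^k * (1/((ij.1:ℝ)^2*(ij.2:ℝ)^2)) := by rw [hijk]
          _ = A^2 * M^k * ∑ ij ∈ (Finset.HasAntidiagonal.antidiagonal k).filter
                (fun ij => ij.1 < k ∧ ij.2 < k), (1/((ij.1:ℝ)^2*(ij.2:ℝ)^2)) := by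
              rw [Finset.mul_sum]
          _ ≤ A^2 * M^k * (8/(k:ℝ)^2) := by
              apply mul_le_mul_of_nonneg_left _ (by positivity)
              calc ∑ ij ∈ (Finset.HasAntidiagonal.antidiagonal k).filter
                    (fun ij => ij.1 < k ∧ ij.2 < k), (1/((ij.1:ℝ)^2*(ij.2:ℝ)^2))
                  ≤ ∑ ij ∈ Finset.HasAntidiagonal.antidiagonal k, (1/((ij.1:ℝ)^2*(ij.2:ℝ)^2)) :=
                    Finset.sum_le_sum_of_subset_of_nonneg (Finset.filter_subset _ _)
                      (fun _ _ _ => by positivity)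
                _ ≤ 8/(k:ℝ)^2 := conv2 k
      -- bound the cubic sum
      have hS3 : ‖∑ ij ∈ Finset.HasAntidiagonal.antidiagonal k, ∑ lm ∈ Finset.HasAntidiagonal.antidiagonal ij.2,
          (if ij.1 < k ∧ lm.1 < k ∧ lm.2 < k then Uc ij.1 * Uc lm.1 * Uc lm.2 else 0)‖
          ≤ A^3 * M^k * (64/(k:ℝ)^2) := by
        calc ‖∑ ij ∈ Finset.HasAntidiagonal.antidiagonal k, ∑ lm ∈ Finset.HasAntidiagonal.antidiagonal ij.2,
              (if ij.1 < k ∧ lm.1 < k ∧ lm.2 < k then Uc ij.1 * Uc lm.1 * Uc lm.2 else 0)‖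
            ≤ ∑ ij ∈ Finset.HasAntidiagonal.antidiagonal k, ∑ lm ∈ Finset.HasAntidiagonal.antidiagonal ij.2,
              ‖(if ij.1 < k ∧ lm.1 < k ∧ lm.2 < k then Uc ij.1 * Uc lm.1 * Uc lm.2 else 0)‖ := by
              refine le_trans (norm_sum_le _ _) (Finset.sum_le_sum fun ij _ => norm_sum_le _ _)
          _ ≤ ∑ ij ∈ Finset.HasAntidiagonal.antidiagonal k, ∑ lm ∈ Finset.HasAntidiagonal.antidiagonal ij.2,
              A^3 * M^k * (1/((ij.1:ℝ)^2) * (1/((lm.1:ℝ)^2*(lm.2:ℝ)^2))) := by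
              apply Finset.sum_le_sum
              intro ij hij
              apply Finset.sum_le_sum
              intro lm hlm
              rw [Finset.HasAntidiagonal.mem_antidiagonal] at hij hlm
              by_cases hc : ij.1 < k ∧ lm.1 < k ∧ lm.2 < k
              · rw [if_pos hc]
                obtain ⟨h1, h2, h3⟩ := hc
                have b1 := bnd ij.1 h1
                have b2 := bnd lm.1 h2
                have b3 := bnd lm.2 h3
                have hsum : ij.1 + lm.1 + lm.2 = k := by omega
                calc ‖Uc ij.1 * Uc lm.1 * Uc lm.2‖
                    = ‖Uc ij.1‖ * ‖Uc lm.1‖ * ‖Uc lm.2‖ := by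
                      rw [norm_mul, norm_mul]
                  _ ≤ (A * M^ij.1 / (ij.1:ℝ)^2) * (A * M^lm.1 / (lm.1:ℝ)^2)
                      * (A * M^lm.2 / (lm.2:ℝ)^2) := by
                      apply mul_le_mul _ b3 (norm_nonneg _) (by positivity)
                      exact mul_le_mul b1 b2 (norm_nonneg _) (by positivity)
                  _ = A^3 * M^(ij.1+lm.1+lm.2)
                      * (1/((ij.1:ℝ)^2) * (1/((lm.1:ℝ)^2*(lm.2:ℝ)^2))) := by
                      rw [pow_add, pow_add]; ring
                  _ = A^3 * M^k * (1/((ij.1:ℝ)^2) * (1/((lm.1:ℝ)^2*(lm.2:ℝ)^2))) := by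
                      rw [hsum]
              · rw [if_neg hc]
                simp only [norm_zero]
                positivity
          _ = A^3 * M^k * ∑ ij ∈ Finset.HasAntidiagonal.antidiagonal k, (1/((ij.1:ℝ)^2)
                * ∑ lm ∈ Finset.HasAntidiagonal.antidiagonal ij.2, (1/((lm.1:ℝ)^2*(lm.2:ℝ)^2))) := by
              rw [Finset.mul_sum]
              apply Finset.sum_congr rfl
              intro ij _
              rw [Finset.mul_sum, Finset.mul_sum]
          _ ≤ A^3 * M^k * (64/(k:ℝ)^2) := by
              apply mul_le_mul_of_nonneg_left _ (by positivity)
              calc ∑ ij ∈ Finset.HasAntidiagonal.antidiagonal k, (1/((ij.1:ℝ)^2)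
                    * ∑ lm ∈ Finset.HasAntidiagonal.antidiagonal ij.2, (1/((lm.1:ℝ)^2*(lm.2:ℝ)^2)))
                  ≤ ∑ ij ∈ Finset.HasAntidiagonal.antidiagonal k, (1/((ij.1:ℝ)^2) * (8/(ij.2:ℝ)^2)) := by
                    apply Finset.sum_le_sum
                    intro ij _
                    exact mul_le_mul_of_nonneg_left (conv2 ij.2) (by positivity)
                _ = 8 * ∑ ij ∈ Finset.HasAntidiagonal.antidiagonal k, (1/((ij.1:ℝ)^2*(ij.2:ℝ)^2)) := by
                    rw [Finset.mul_sum]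
                    apply Finset.sum_congr rfl
                    intro ij _
                    ring
                _ ≤ 8 * (8/(k:ℝ)^2) := by
                    apply mul_le_mul_of_nonneg_left (conv2 k) (by norm_num)
                _ = 64/(k:ℝ)^2 := by ring
      -- combine
      have hnorm : ‖(k:ℂ)^2 + c*k - r‖ * ‖Uc k‖ ≤ A * M^k / (k:ℝ)^2 := by
        rw [← norm_mul, hrk]
        calc ‖-a * ∑ ij ∈ (Finset.HasAntidiagonal.antidiagonal k).filter (fun ij => ij.1 < k ∧ ij.2 < k),
              Uc ij.1 * Uc ij.2
            - b * ∑ ij ∈ Finset.HasAntidiagonal.antidiagonal k, ∑ lm ∈ Finset.HasAntidiagonal.antidiagonal ij.2,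
              (if ij.1 < k ∧ lm.1 < k ∧ lm.2 < k then Uc ij.1 * Uc lm.1 * Uc lm.2 else 0)‖
            ≤ ‖a‖ * (A^2 * M^k * (8/(k:ℝ)^2)) + ‖b‖ * (A^3 * M^k * (64/(k:ℝ)^2)) := by
              refine le_trans (norm_sub_le _ _) ?_
              rw [norm_mul, norm_mul, norm_neg]
              gcongr
          _ ≤ A * M^k / (k:ℝ)^2 := by
              have hMk : (0:ℝ) ≤ M^k := by positivity
              have hkk : (0:ℝ) < (k:ℝ)^2 := by positivity
              have hAA : 8*‖a‖*A^2 + 64*‖b‖*A^3 ≤ A := by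
                nlinarith [mul_le_mul_of_nonneg_left hA8 (le_of_lt hApos),
                  mul_nonneg (mul_nonneg (norm_nonneg b) (sq_nonneg A))
                    (sub_nonneg.mpr hA1), norm_nonneg a, norm_nonneg b]
              calc ‖a‖ * (A^2 * M^k * (8/(k:ℝ)^2)) + ‖b‖ * (A^3 * M^k * (64/(k:ℝ)^2))
                  = (8*‖a‖*A^2 + 64*‖b‖*A^3) * (M^k/(k:ℝ)^2) := by ring
                _ ≤ A * (M^k/(k:ℝ)^2) := mul_le_mul_of_nonneg_right hAA (by positivity)
                _ = A * M^k / (k:ℝ)^2 := by ring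
      calc ‖Uc k‖ ≤ ‖(k:ℂ)^2 + c*k - r‖ * ‖Uc k‖ := by
            nlinarith [norm_nonneg (Uc k)]
        _ ≤ A * M^k / (k:ℝ)^2 := hnorm
  refine ⟨M, hMpos, ?_, ?_⟩
  · intro k
    rcases Nat.eq_zero_or_pos k with rfl | hk1
    · simp [hU0]
    · have h := key k
      have hk2 : (1:ℝ) ≤ (k:ℝ)^2 := by
        have : (1:ℝ) ≤ (k:ℝ) := by exact_mod_cast hk1
        nlinarith
      have hMk : (0:ℝ) ≤ M^k := by positivity
      calc ‖Uc k‖ ≤ A * M^k / (k:ℝ)^2 := h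
        _ ≤ M^k := by
          rw [div_le_iff₀ (by positivity)]
          nlinarith
  · intro ζ hζ
    have h1 : Real.exp ζ < Real.exp (-Real.log M) := Real.exp_lt_exp.mpr hζ
    rw [Real.exp_neg, Real.exp_log hMpos] at h1
    have hq : M * Real.exp ζ < 1 := by
      have := Real.exp_pos ζ
      calc M * Real.exp ζ < M * M⁻¹ := by
            apply mul_lt_mul_of_pos_left h1 hMpos
        _ = 1 := mul_inv_cancel₀ (ne_of_gt hMpos)
    apply Summable.of_nonneg_of_le (fun k => norm_nonneg _) _
      (summable_geometric_of_lt_one (by positivity) hq)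
    intro k
    have hUk : ‖Uc k‖ ≤ M^k := by
      rcases Nat.eq_zero_or_pos k with rfl | hk1
      · simp [hU0]
      · have h := key k
        have hk2 : (1:ℝ) ≤ (k:ℝ)^2 := by
          have : (1:ℝ) ≤ (k:ℝ) := by exact_mod_cast hk1
          nlinarith
        calc ‖Uc k‖ ≤ A * M^k / (k:ℝ)^2 := h
          _ ≤ M^k := by
            rw [div_le_iff₀ (by positivity)]
            nlinarith [pow_nonneg (le_of_lt hMpos) k]
    calc ‖Uc k * Complex.exp (k * ζ)‖ = ‖Uc k‖ * Real.exp (k * ζ) := by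
          rw [norm_mul, Complex.norm_exp]
          norm_num
      _ ≤ M^k * Real.exp (k * ζ) := by
          apply mul_le_mul_of_nonneg_right hUk (le_of_lt (Real.exp_pos _))
      _ = (M * Real.exp ζ)^k := by
          rw [mul_pow, ← Real.exp_nat_mul]
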